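/- Let f_1,…,f_k : ℝⁿ → ℝ be continuously differentiable, x ∈ ℝⁿ, ε > 0, and let v̄ ≠ 0 be an element of minimal Euclidean norm in −F_ε(x) := {−w : w ∈ F_ε(x)}. Then for every i ∈ {1,…,k} and every t with 0 ≤ t ≤ ε/‖v̄‖ it holds that f_i(x + t v̄) ≤ f_i(x) − t ‖v̄‖². -/

import Mathlib

open InnerProductSpace

/-- The Goldstein-type set `F_ε(x)` for continuously differentiable objectives:
the convex hull of all gradients of all objectives over the closed `ε`-ball around `x`. -/
noncomputable def Feps {n k : ℕ} (f : Fin k → EuclideanSpace ℝ (Fin n) → ℝ)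
    (x : EuclideanSpace ℝ (Fin n)) (ε : ℝ) : Set (EuclideanSpace ℝ (Fin n)) :=
  convexHull ℝ (⋃ i, (fun y => gradient (f i) y) '' Metric.closedBall x ε)

lemma min_norm_inner {E : Type*} [NormedAddCommGroup E] [InnerProductSpace ℝ E]
    {C : Set E} (hC : Convex ℝ C) {v : E} (hv : v ∈ C)
    (hmin : ∀ w ∈ C, ‖v‖ ≤ ‖w‖) : ∀ w ∈ C, ‖v‖ ^ 2 ≤ ⟪v, w⟫_ℝ := by
  haveI : Nonempty C := ⟨⟨v, hv⟩⟩
  have h0 : ‖(0 : E) - v‖ = ⨅ w : C, ‖(0 : E) - w‖ := by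
    refine le_antisymm (le_ciInf fun w => by simpa using hmin w w.2) ?_
    have hbdd : BddBelow (Set.range fun w : C => ‖(0 : E) - (w : E)‖) := by
      refine ⟨0, ?_⟩
      rintro _ ⟨w, rfl⟩
      positivity
    exact ciInf_le hbdd ⟨v, hv⟩
  have := (norm_eq_iInf_iff_real_inner_le_zero hC hv).mp h0
  intro w hw
  have h := this w hw
  rw [zero_sub, inner_sub_right, inner_neg_left, inner_neg_left] at h
  rw [← real_inner_self_eq_norm_sq]
  linarith

/-- guaranteed descent in each objective along the minimal-norm
direction `v̄` of `-F_ε(x)` for all step sizes `t ∈ [0, ε/‖v̄‖]`. -/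
theorem descent_step_size_bound {n k : ℕ}
    (f : Fin k → EuclideanSpace ℝ (Fin n) → ℝ) (hf : ∀ i, ContDiff ℝ 1 (f i))
    (x : EuclideanSpace ℝ (Fin n)) (ε : ℝ) (hε : 0 < ε)
    (vbar : EuclideanSpace ℝ (Fin n)) (hvmem : vbar ∈ -(Feps f x ε))
    (hvmin : ∀ w ∈ -(Feps f x ε), ‖vbar‖ ≤ ‖w‖) (hv0 : vbar ≠ 0) :
    ∀ i : Fin k, ∀ t : ℝ, 0 ≤ t → t ≤ ε / ‖vbar‖ →
      f i (x + t • vbar) ≤ f i x - t * ‖vbar‖ ^ 2 := by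
  have hvpos : (0 : ℝ) < ‖vbar‖ := norm_pos_iff.mpr hv0
  have hCconv : Convex ℝ (-(Feps f x ε)) := (convex_convexHull ℝ _).neg
  -- key gradient inequality
  have hkey : ∀ i : Fin k, ∀ y ∈ Metric.closedBall x ε,
      ⟪gradient (f i) y, vbar⟫_ℝ ≤ -‖vbar‖ ^ 2 := by
    intro i y hy
    have hg : gradient (f i) y ∈ Feps f x ε :=
      subset_convexHull ℝ _ (Set.mem_iUnion.mpr ⟨i, ⟨y, hy, rfl⟩⟩)
    have hng : -gradient (f i) y ∈ -(Feps f x ε) := Set.neg_mem_neg.mpr hg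
    have := min_norm_inner hCconv hvmem hvmin _ hng
    rw [inner_neg_right] at this
    rw [real_inner_comm]
    linarith
  intro i t ht htε
  have hdiff : Differentiable ℝ (f i) := (hf i).differentiable one_ne_zero
  set φ : ℝ → ℝ := fun s => f i (x + s • vbar) + s * ‖vbar‖ ^ 2 with hφ
  have hderiv : ∀ s : ℝ, HasDerivAt φ
      (⟪gradient (f i) (x + s • vbar), vbar⟫_ℝ + ‖vbar‖ ^ 2) s := by
    intro s
    have hline : HasDerivAt (fun s : ℝ => x + s • vbar) vbar s := by
      simpa using ((hasDerivAt_id s).smul_const vbar).const_add x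
    have hgr := (hdiff (x + s • vbar)).hasGradientAt
    have hF := hgr.hasFDerivAt
    have hc := hF.comp_hasDerivAt s hline
    have : (toDual ℝ (EuclideanSpace ℝ (Fin n)) (gradient (f i) (x + s • vbar))) vbar
        = ⟪gradient (f i) (x + s • vbar), vbar⟫_ℝ := rfl
    rw [this] at hc
    exact hc.add (hasDerivAt_mul_const (‖vbar‖ ^ 2))
  have htε' : t * ‖vbar‖ ≤ ε := (le_div_iff₀ hvpos).mp htε
  have hball : ∀ s ∈ Set.Icc (0:ℝ) t, x + s • vbar ∈ Metric.closedBall x ε := by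
    intro s hs
    rw [Metric.mem_closedBall, dist_eq_norm]
    have : ‖s • vbar‖ = s * ‖vbar‖ := by
      rw [norm_smul, Real.norm_eq_abs, abs_of_nonneg hs.1]
    calc ‖x + s • vbar - x‖ = s * ‖vbar‖ := by rw [add_sub_cancel_left, this]
      _ ≤ t * ‖vbar‖ := by nlinarith [hs.2, hvpos]
      _ ≤ ε := htε'
  have hanti : AntitoneOn φ (Set.Icc 0 t) := by
    refine antitoneOn_of_deriv_nonpos (convex_Icc 0 t)
      (fun s hs => ((hderiv s).continuousAt).continuousWithinAt)
      (fun s hs => ((hderiv s).differentiableAt).differentiableWithinAt) ?_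
    intro s hs
    rw [interior_Icc] at hs
    rw [(hderiv s).deriv]
    have := hkey i (x + s • vbar) (hball s ⟨le_of_lt hs.1, le_of_lt hs.2⟩)
    linarith
  have := hanti (Set.left_mem_Icc.mpr ht) (Set.right_mem_Icc.mpr ht) ht
  simp only [hφ, zero_smul, add_zero, zero_mul] at this
  linarith
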